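/- Let θ ∈ (0, π/2), n ≥ 2, and let C = {x ∈ ℝⁿ : x₁ ≥ |x| cos θ}. Let h(x) = |x|^α φ(x/|x|) be the positive harmonic function in ℝⁿ \ C vanishing on ∂C with h(-e₁) = 1, where α ∈ (0,1) is the associated homogeneity exponent. Then for every open bounded set Ω with Ω̄ ∩ C = ∅ and dist(Ω, 0) > 0, one has inf_Ω |∇h| > 0, and for C₀ > 0 sufficiently large (depending on r, n, Ω) the function φ(x) = C₀ h(x) - (r/(2n))|x|² satisfies -Δφ = r and |∇φ| ≥ 1 pointwise in Ω, i.e. min(-Δφ - r, |∇φ| - 1) ≥ 0 in Ω. -/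

import Mathlib

open Metric

noncomputable def lap {n : ℕ} (u : EuclideanSpace ℝ (Fin n) → ℝ)
    (x : EuclideanSpace ℝ (Fin n)) : ℝ :=
  ∑ i, fderiv ℝ (fun y => fderiv ℝ u y (EuclideanSpace.single i 1)) x (EuclideanSpace.single i 1)

open RealInnerProductSpace

variable {n : ℕ}

private lemma hasFDerivAt_normsq (y : EuclideanSpace ℝ (Fin n)) :
    HasFDerivAt (fun y : EuclideanSpace ℝ (Fin n) => ‖y‖ ^ 2)
      ((InnerProductSpace.toDual ℝ (EuclideanSpace ℝ (Fin n))) ((2:ℝ) • y)) y := by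
  have heq : (fun y : EuclideanSpace ℝ (Fin n) => ‖y‖ ^ 2) = fun y => ⟪y, y⟫ :=
    funext fun y => (real_inner_self_eq_norm_sq y).symm
  rw [heq]
  have H := (hasFDerivAt_id y).inner ℝ (hasFDerivAt_id y)
  refine H.congr_fderiv ?_
  ext v
  simp [fderivInnerCLM_apply, InnerProductSpace.toDual_apply_apply, inner_smul_left,
    real_inner_comm]
  ring

private lemma fderiv_normsq_apply (y v : EuclideanSpace ℝ (Fin n)) :
    fderiv ℝ (fun y : EuclideanSpace ℝ (Fin n) => ‖y‖ ^ 2) y v = 2 * ⟪y, v⟫ := by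
  rw [(hasFDerivAt_normsq y).fderiv, InnerProductSpace.toDual_apply_apply, real_inner_smul_left]

private lemma normsq_inner_fun (i : Fin n) :
    (fun y : EuclideanSpace ℝ (Fin n) =>
      fderiv ℝ (fun y : EuclideanSpace ℝ (Fin n) => ‖y‖ ^ 2) y (EuclideanSpace.single i 1))
      = fun y => 2 * y i := by
  funext y
  rw [fderiv_normsq_apply, EuclideanSpace.inner_single_right]
  simp

private lemma lap_normsq (x : EuclideanSpace ℝ (Fin n)) :
    lap (fun y : EuclideanSpace ℝ (Fin n) => ‖y‖ ^ 2) x = 2 * n := by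
  unfold lap
  have : ∀ i : Fin n,
      fderiv ℝ (fun y : EuclideanSpace ℝ (Fin n) =>
        fderiv ℝ (fun y : EuclideanSpace ℝ (Fin n) => ‖y‖ ^ 2) y (EuclideanSpace.single i 1)) x
        (EuclideanSpace.single i 1) = 2 := by
    intro i
    rw [normsq_inner_fun i]
    have h1 : (fun y : EuclideanSpace ℝ (Fin n) => 2 * y i)
        = fun y => 2 * (EuclideanSpace.proj (𝕜 := ℝ) i) y := rfl
    rw [h1, fderiv_const_mul ((EuclideanSpace.proj (𝕜 := ℝ) i).differentiableAt)]
    rw [(EuclideanSpace.proj (𝕜 := ℝ) i).fderiv]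
    simp [EuclideanSpace.single_apply]
  rw [Finset.sum_congr rfl fun i _ => this i]
  simp [mul_comm]

private lemma euler_id {n : ℕ} {U : Set (EuclideanSpace ℝ (Fin n))} (hU : IsOpen U)
    {h : EuclideanSpace ℝ (Fin n) → ℝ} (hh : ContDiffOn ℝ 2 h U) {α : ℝ}
    (hhom : ∀ (x : EuclideanSpace ℝ (Fin n)) (t : ℝ), 0 < t → h (t • x) = t ^ α * h x)
    {x : EuclideanSpace ℝ (Fin n)} (hx : x ∈ U) :
    fderiv ℝ h x x = α * h x := by
  have hdiff : DifferentiableAt ℝ h x :=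
    ((hh.differentiableOn (by norm_num)).differentiableAt (hU.mem_nhds hx))
  have hline : HasDerivAt (fun t : ℝ => t • x) x 1 := by
    simpa using (hasDerivAt_id (1:ℝ)).smul_const x
  have h1 : HasDerivAt (fun t : ℝ => h (t • x)) (fderiv ℝ h x x) 1 := by
    have hd : HasFDerivAt h (fderiv ℝ h x) ((1:ℝ) • x) := by rw [one_smul]; exact hdiff.hasFDerivAt
    exact hd.comp_hasDerivAt 1 hline
  have h2 : HasDerivAt (fun t : ℝ => t ^ α * h x) (α * h x) 1 := by
    have := (Real.hasDerivAt_rpow_const (x := (1:ℝ)) (p := α) (Or.inl one_ne_zero)).mul_const (h x)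
    simpa using this
  have hev : (fun t : ℝ => t ^ α * h x) =ᶠ[nhds 1] fun t : ℝ => h (t • x) := by
    filter_upwards [eventually_gt_nhds (by norm_num : (0:ℝ) < 1)] with t ht
    rw [hhom x t ht]
  exact h1.unique (h2.congr_of_eventuallyEq hev.symm)

private lemma lap_combo {n : ℕ} {U : Set (EuclideanSpace ℝ (Fin n))} (hU : IsOpen U)
    {h : EuclideanSpace ℝ (Fin n) → ℝ} (hh : ContDiffOn ℝ 2 h U) (a b : ℝ)
    {x : EuclideanSpace ℝ (Fin n)} (hx : x ∈ U) :
    lap (fun y => a * h y - b * ‖y‖ ^ 2) x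
      = a * lap h x - b * lap (fun y : EuclideanSpace ℝ (Fin n) => ‖y‖ ^ 2) x := by
  have hfd : ContDiffOn ℝ 1 (fderiv ℝ h) U := hh.fderiv_of_isOpen hU (by norm_num)
  unfold lap
  have key : ∀ i : Fin n,
      fderiv ℝ (fun y => fderiv ℝ (fun y => a * h y - b * ‖y‖ ^ 2) y (EuclideanSpace.single i 1)) x
        (EuclideanSpace.single i 1)
      = a * fderiv ℝ (fun y => fderiv ℝ h y (EuclideanSpace.single i 1)) x (EuclideanSpace.single i 1)
        - b * fderiv ℝ (fun y => fderiv ℝ (fun y : EuclideanSpace ℝ (Fin n) => ‖y‖ ^ 2) y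
            (EuclideanSpace.single i 1)) x (EuclideanSpace.single i 1) := by
    intro i
    set e := EuclideanSpace.single (𝕜 := ℝ) i (1:ℝ) with he
    have d1 : DifferentiableAt ℝ (fun y => fderiv ℝ h y e) x := by
      have hd := (hfd.differentiableOn (by norm_num)).differentiableAt (hU.mem_nhds hx)
      exact (ContinuousLinearMap.apply ℝ ℝ e).differentiableAt.comp x hd
    have d2 : DifferentiableAt ℝ
        (fun y => fderiv ℝ (fun y : EuclideanSpace ℝ (Fin n) => ‖y‖ ^ 2) y e) x := by
      rw [normsq_inner_fun i]
      exact ((EuclideanSpace.proj (𝕜 := ℝ) i).differentiableAt).const_mul 2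
    have ev : (fun y => fderiv ℝ (fun y => a * h y - b * ‖y‖ ^ 2) y e)
        =ᶠ[nhds x] fun y => a * fderiv ℝ h y e
          - b * fderiv ℝ (fun y : EuclideanSpace ℝ (Fin n) => ‖y‖ ^ 2) y e := by
      filter_upwards [hU.mem_nhds hx] with y hy
      have dh : DifferentiableAt ℝ h y :=
        (hh.differentiableOn (by norm_num)).differentiableAt (hU.mem_nhds hy)
      have H : HasFDerivAt (fun y => a * h y - b * ‖y‖ ^ 2)
          (a • fderiv ℝ h y - b • fderiv ℝ (fun y : EuclideanSpace ℝ (Fin n) => ‖y‖ ^ 2) y) y :=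
        (dh.hasFDerivAt.const_mul a).sub ((hasFDerivAt_normsq y).differentiableAt.hasFDerivAt.const_mul b)
      rw [H.fderiv]
      simp
    rw [ev.fderiv_eq]
    have H2 : HasFDerivAt (fun y => a * fderiv ℝ h y e
          - b * fderiv ℝ (fun y : EuclideanSpace ℝ (Fin n) => ‖y‖ ^ 2) y e)
        (a • fderiv ℝ (fun y => fderiv ℝ h y e) x
          - b • fderiv ℝ (fun y => fderiv ℝ (fun y : EuclideanSpace ℝ (Fin n) => ‖y‖ ^ 2) y e) x) x :=
      (d1.hasFDerivAt.const_mul a).sub (d2.hasFDerivAt.const_mul b)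
    rw [H2.fderiv]
    simp
  rw [Finset.sum_congr rfl fun i _ => key i, Finset.sum_sub_distrib, ← Finset.mul_sum, ← Finset.mul_sum]

private lemma grad_combo {n : ℕ} {h : EuclideanSpace ℝ (Fin n) → ℝ} (a b : ℝ)
    {x : EuclideanSpace ℝ (Fin n)} (dh : DifferentiableAt ℝ h x) :
    gradient (fun y => a * h y - b * ‖y‖ ^ 2) x = a • gradient h x - b • ((2:ℝ) • x) := by
  have H : HasFDerivAt (fun y => a * h y - b * ‖y‖ ^ 2)
      (a • fderiv ℝ h x - b • (InnerProductSpace.toDual ℝ (EuclideanSpace ℝ (Fin n)) ((2:ℝ) • x))) x :=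
    (dh.hasFDerivAt.const_mul a).sub ((hasFDerivAt_normsq x).const_mul b)
  have := (hasFDerivAt_iff_hasGradientAt.mp H).gradient
  rw [this, map_sub, map_smul, map_smul, LinearIsometryEquiv.symm_apply_apply]
  rfl

theorem stmt18 (n : ℕ) (hn : 2 ≤ n) (θ : ℝ) (hθ : θ ∈ Set.Ioo 0 (Real.pi / 2))
    (r : ℝ) (hr : 0 ≤ r)
    (C : Set (EuclideanSpace ℝ (Fin n)))
    (hC : C = {x : EuclideanSpace ℝ (Fin n) | ‖x‖ * Real.cos θ ≤ x ⟨0, by omega⟩})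
    (α : ℝ) (hα : α ∈ Set.Ioo (0 : ℝ) 1)
    (h : EuclideanSpace ℝ (Fin n) → ℝ)
    (hsmooth : ContDiffOn ℝ 2 h Cᶜ)
    (hhom : ∀ (x : EuclideanSpace ℝ (Fin n)) (t : ℝ), 0 < t → h (t • x) = t ^ α * h x)
    (hharm : ∀ x ∈ Cᶜ, lap h x = 0)
    (hpos : ∀ x ∈ Cᶜ, 0 < h x)
    (hbdry : ∀ x ∈ frontier C, x ≠ 0 → h x = 0)
    (hnorm : h (-(EuclideanSpace.single ⟨0, by omega⟩ 1)) = 1)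
    (Ω : Set (EuclideanSpace ℝ (Fin n))) (hΩopen : IsOpen Ω) (hΩbdd : Bornology.IsBounded Ω)
    (hΩC : closure Ω ⊆ Cᶜ) :
    (∃ m > 0, ∀ x ∈ Ω, m ≤ ‖gradient h x‖) ∧
    ∃ C₀ > 0, ∀ x ∈ Ω,
      -lap (fun y => C₀ * h y - (r / (2 * n)) * ‖y‖ ^ 2) x = r ∧
      1 ≤ ‖gradient (fun y => C₀ * h y - (r / (2 * n)) * ‖y‖ ^ 2) x‖ := by
  have hCclosed : IsClosed C := by
    rw [hC]
    exact isClosed_le (continuous_norm.mul continuous_const)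
      (EuclideanSpace.proj (𝕜 := ℝ) (⟨0, by omega⟩ : Fin n)).continuous
  have hUopen : IsOpen Cᶜ := hCclosed.isOpen_compl
  have h0C : (0 : EuclideanSpace ℝ (Fin n)) ∈ C := by rw [hC]; simp
  rcases Set.eq_empty_or_nonempty Ω with hemp | hne
  · subst hemp
    exact ⟨⟨1, one_pos, by simp⟩, 1, one_pos, by simp⟩
  have hK : IsCompact (closure Ω) :=
    Metric.isCompact_of_isClosed_isBounded isClosed_closure hΩbdd.closure
  have hcont : ContinuousOn h (closure Ω) := (hsmooth.continuousOn).mono hΩC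
  obtain ⟨z, hzK, hzmin⟩ := hK.exists_isMinOn hne.closure hcont
  have hδ : 0 < h z := hpos z (hΩC hzK)
  obtain ⟨R, hR, hRb⟩ := hΩbdd.exists_pos_norm_le
  set m := α * h z / R with hm_def
  have hm : 0 < m := div_pos (mul_pos hα.1 hδ) hR
  have key : ∀ x ∈ Ω, m ≤ ‖gradient h x‖ := by
    intro x hx
    have hxU : x ∈ Cᶜ := hΩC (subset_closure hx)
    have hxne : x ≠ 0 := fun h0 => hxU (h0 ▸ h0C)
    have hxnorm : 0 < ‖x‖ := norm_pos_iff.mpr hxne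
    have heuler := euler_id hUopen hsmooth hhom hxU
    have hip : ⟪gradient h x, x⟫ = α * h x := by
      rw [← heuler]; exact InnerProductSpace.toDual_symm_apply
    have hCS : α * h x ≤ ‖gradient h x‖ * ‖x‖ := hip ▸ real_inner_le_norm _ _
    have h1 : m * ‖x‖ ≤ α * h x := by
      have h2 : m * ‖x‖ ≤ m * R := by nlinarith [hRb x hx]
      have h3 : m * R = α * h z := div_mul_cancel₀ _ hR.ne'
      have h4 : α * h z ≤ α * h x :=
        mul_le_mul_of_nonneg_left (isMinOn_iff.mp hzmin x (subset_closure hx)) hα.1.le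
      linarith
    have := le_trans h1 hCS
    exact le_of_mul_le_mul_right this hxnorm
  refine ⟨⟨m, hm, key⟩, ?_⟩
  set c := r / (2 * (n : ℝ)) with hc_def
  have hn0 : (0:ℝ) < 2 * n := by
    have : (2:ℝ) ≤ (n:ℝ) := by exact_mod_cast hn
    linarith
  refine ⟨(1 + 2 * c * R) / m, ?_, ?_⟩
  · have hc : 0 ≤ c := by positivity
    positivity
  intro x hx
  have hxU : x ∈ Cᶜ := hΩC (subset_closure hx)
  have dh : DifferentiableAt ℝ h x :=
    (hsmooth.differentiableOn (by norm_num)).differentiableAt (hUopen.mem_nhds hxU)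
  set C₀ := (1 + 2 * c * R) / m with hC₀def
  have hc : 0 ≤ c := by positivity
  constructor
  · rw [lap_combo hUopen hsmooth C₀ c hxU, hharm x hxU, lap_normsq]
    rw [hc_def]
    field_simp
    ring
  · rw [grad_combo C₀ c dh]
    have h5 := norm_sub_norm_le (C₀ • gradient h x) (c • ((2:ℝ) • x))
    rw [norm_smul, norm_smul, norm_smul] at h5
    simp only [Real.norm_eq_abs] at h5
    rw [abs_of_nonneg (by positivity : (0:ℝ) ≤ C₀), abs_of_nonneg hc,
      abs_of_nonneg (by norm_num : (0:ℝ) ≤ 2)] at h5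
    have h6 : C₀ * m = 1 + 2 * c * R := div_mul_cancel₀ _ hm.ne'
    have h7 := key x hx
    have h8 := hRb x hx
    have hC₀0 : (0:ℝ) ≤ C₀ := by positivity
    nlinarith [norm_nonneg x, norm_nonneg (gradient h x)]
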